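/- Let K be a real quadratic field and u a unit of its ring of integers with norm -1. Define Δ_n = N_{K/ℚ}(u^n - 1). If n = 2k with k odd, then Δ_n = -Δ_k^2; in particular, for n ≡ 2 (mod 4) with n > 2, every prime dividing Δ_n divides Δ_{n/2}, so Δ_n has no primitive prime divisor. -/

import Mathlib

open NumberField

lemma quad_norm_aux (K : Type*) [Field K] [NumberField K]
    (hdeg : Module.finrank ℚ K = 2) (w : K) (hw : Algebra.norm ℚ w = -1) :
    Algebra.norm ℚ (w + 1) = - Algebra.norm ℚ (w - 1) := by
  let b : Module.Basis (Fin 2) ℚ K := (Module.finBasis ℚ K).reindex (finCongr hdeg)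
  have h : ∀ x : K, Algebra.norm ℚ x = (Algebra.leftMulMatrix b x).det := fun x =>
    Algebra.norm_eq_matrix_det b x
  set M := Algebra.leftMulMatrix b w with hM
  have h1 : Algebra.leftMulMatrix b (w+1) = M + 1 := by rw [map_add, map_one]
  have h2 : Algebra.leftMulMatrix b (w-1) = M - 1 := by rw [map_sub, map_one]
  have hwdet : M.det = -1 := by rw [← h, hw]
  rw [h, h, h1, h2, Matrix.det_fin_two, Matrix.det_fin_two]
  rw [Matrix.det_fin_two] at hwdet
  simp only [Matrix.add_apply, Matrix.sub_apply, Matrix.one_apply_eq,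
    Matrix.one_apply_ne (by decide : (0:Fin 2) ≠ 1),
    Matrix.one_apply_ne (by decide : (1:Fin 2) ≠ 0)]
  linear_combination 2 * hwdet

theorem lehmerPierce_two_mod_four (K : Type*) [Field K] [NumberField K]
    (hdeg : Module.finrank ℚ K = 2) (σ : K →+* ℝ)
    (u : (RingOfIntegers K)ˣ)
    (hu : ((u : RingOfIntegers K) : K) ≠ 1 ∧ ((u : RingOfIntegers K) : K) ≠ -1)
    (hnorm : Algebra.norm ℤ ((u : RingOfIntegers K)) = -1)
    (Δ : ℕ → ℤ) (hΔ : ∀ m : ℕ, Δ m = Algebra.norm ℤ ((u : RingOfIntegers K) ^ m - 1))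
    (n k : ℕ) (hk : Odd k) (hn : n = 2 * k) :
    Δ n = -(Δ k) ^ 2 ∧
      (2 < n → ¬ ∃ p : ℤ, Prime p ∧ p ∣ Δ n ∧
        ∀ m : ℕ, 0 < m → m < n → Δ m ≠ 0 → ¬ p ∣ Δ m) := by
  set v : K := ((u : RingOfIntegers K) : K) with hv
  -- cast Δ to ℚ-norms
  have hcast : ∀ m : ℕ, ((Δ m : ℚ)) = Algebra.norm ℚ (v ^ m - 1) := by
    intro m
    rw [hΔ m, Algebra.coe_norm_int]
    push_cast
    rfl
  have hnv : Algebra.norm ℚ v = -1 := by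
    have := Algebra.coe_norm_int ((u : RingOfIntegers K))
    rw [hnorm] at this
    push_cast at this
    exact this.symm
  set w : K := v ^ k with hw
  have hnw : Algebra.norm ℚ w = -1 := by
    rw [hw, map_pow, hnv, hk.neg_one_pow]
  -- the main identity over ℚ
  have hmain : Δ n = -(Δ k) ^ 2 := by
    have hq : ((Δ n : ℚ)) = -((Δ k : ℚ)) ^ 2 := by
      rw [hcast, hcast, hn]
      have : v ^ (2 * k) - 1 = (w - 1) * (w + 1) := by
        rw [hw]; ring
      rw [this, map_mul, quad_norm_aux K hdeg w hnw]
      ring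
    exact_mod_cast hq
  refine ⟨hmain, ?_⟩
  intro h2n ⟨p, hp, hpn, hmin⟩
  -- k > 0
  have hk0 : 0 < k := Nat.pos_of_ne_zero (by rintro rfl; exact by simpa using Nat.odd_iff.mp hk)
  have hkn : k < n := by omega
  -- Δ k ≠ 0
  have hΔk : Δ k ≠ 0 := by
    intro h0
    have : Algebra.norm ℚ (w - 1) = 0 := by
      rw [← hcast k, h0]; norm_num
    have hw1 : w = 1 := by
      have := (Algebra.norm_eq_zero_iff).mp this
      have : w = 1 := by linear_combination this
      exact this
    -- then σ v ^ k = 1 with k odd → σ v = 1 → v = 1, contradiction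
    have hσ : σ v ^ k = 1 := by
      have := congrArg σ hw1
      rw [hw, map_pow, map_one] at this
      exact this
    have hσv : σ v = 1 := by
      have hinj : Function.Injective fun a : ℝ => a ^ k := (Odd.strictMono_pow hk).injective
      have : (fun a : ℝ => a ^ k) (σ v) = (fun a : ℝ => a ^ k) 1 := by
        simpa using hσ
      exact hinj this
    exact hu.1 (σ.injective (by rw [hσv, map_one]))
  -- p divides Δ k
  have hpk : p ∣ Δ k := by
    have : p ∣ (Δ k) ^ 2 := by
      have : p ∣ -(Δ k) ^ 2 := hmain ▸ hpn
      exact (dvd_neg.mp this)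
    exact hp.dvd_of_dvd_pow this
  exact hmin k hk0 hkn hΔk hpk
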